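/- If G is a connected graph on at least 3 vertices and S is an annihilation set of G (i.e., the sum of the degrees of vertices in S is at most m(G)) of maximum cardinality a(G), then every leaf (vertex of degree 1) of G belongs to S, or else S can be modified to an optimal annihilation set containing all leaves. More precisely: every optimal annihilation set can be replaced by one of the same cardinality containing all leaves of G. -/

import Mathlib

open Classical Finset
noncomputable section

/-- `S` is a 2-dominating set of `G`: every vertex outside `S` has ≥ 2 neighbors in `S`. -/
def IsTwoDomSet {V : Type*} [Fintype V] (G : SimpleGraph V) (S : Finset V) : Prop :=
  ∀ v, v ∉ S → 2 ≤ (G.neighborFinset v ∩ S).card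

/-- The 2-domination number. -/
noncomputable def gamma2 {V : Type*} [Fintype V] (G : SimpleGraph V) : ℕ :=
  sInf {k | ∃ S : Finset V, IsTwoDomSet G S ∧ S.card = k}

/-- `S` is an annihilation set of `G`: the sum of degrees over `S` is at most `m(G)`. -/
def IsAnnSet {V : Type*} [Fintype V] (G : SimpleGraph V) (S : Finset V) : Prop :=
  ∑ v ∈ S, G.degree v ≤ G.edgeFinset.card

/-- The annihilation number: the largest size of an annihilation set (equivalently, the
largest `k` such that the sum of the `k` smallest degrees is at most the edge count). -/
noncomputable def annihilation {V : Type*} [Fintype V] (G : SimpleGraph V) : ℕ :=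
  sSup {k | ∃ S : Finset V, IsAnnSet G S ∧ S.card = k}

lemma walk_closed' {V : Type*} {G : SimpleGraph V} {s : Set V}
    (hs : ∀ a ∈ s, ∀ b, G.Adj a b → b ∈ s) :
    ∀ {a b : V}, a ∈ s → G.Walk a b → b ∈ s := by
  intro a b ha p
  induction p with
  | nil => exact ha
  | cons h q ih => exact ih (hs _ ha _ h)

lemma degree_pos' {V : Type*} [Fintype V] {G : SimpleGraph V} (hconn : G.Connected)
    (hn : 3 ≤ Fintype.card V) (v : V) : 0 < G.degree v := by
  rw [G.degree_pos_iff_exists_adj]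
  obtain ⟨w, hw⟩ := Fintype.exists_ne_of_one_lt_card (by omega) v
  obtain ⟨p⟩ := hconn v w
  cases p with
  | nil => exact absurd rfl hw.symm
  | cons h q => exact ⟨_, h⟩

lemma no_adj_leaves' {V : Type*} [Fintype V] {G : SimpleGraph V} (hconn : G.Connected)
    (hn : 3 ≤ Fintype.card V) {x y : V} (hx : G.degree x = 1) (hy : G.degree y = 1)
    (hadj : G.Adj x y) : False := by
  have hnx : G.neighborFinset x = {y} := by
    apply Finset.eq_singleton_iff_unique_mem.mpr
    refine ⟨by rwa [SimpleGraph.mem_neighborFinset], fun z hz => ?_⟩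
    by_contra hne
    have : 2 ≤ G.degree x := by
      rw [← SimpleGraph.card_neighborFinset_eq_degree]
      exact Finset.one_lt_card.mpr ⟨z, hz, y, by rwa [SimpleGraph.mem_neighborFinset], hne⟩
    omega
  have hny : G.neighborFinset y = {x} := by
    apply Finset.eq_singleton_iff_unique_mem.mpr
    refine ⟨by rw [SimpleGraph.mem_neighborFinset]; exact hadj.symm, fun z hz => ?_⟩
    by_contra hne
    have : 2 ≤ G.degree y := by
      rw [← SimpleGraph.card_neighborFinset_eq_degree]
      exact Finset.one_lt_card.mpr ⟨z, hz, x, by rw [SimpleGraph.mem_neighborFinset]; exact hadj.symm, hne⟩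
    omega
  have hclosed : ∀ a ∈ ({x, y} : Set V), ∀ b, G.Adj a b → b ∈ ({x, y} : Set V) := by
    rintro a (rfl | rfl) b hb
    · have : b ∈ G.neighborFinset a := by rwa [SimpleGraph.mem_neighborFinset]
      rw [hnx] at this
      right; exact Finset.mem_singleton.mp this
    · have : b ∈ G.neighborFinset a := by rwa [SimpleGraph.mem_neighborFinset]
      rw [hny] at this
      left; exact Finset.mem_singleton.mp this
  have hall : ∀ z : V, z ∈ ({x, y} : Set V) := by
    intro z
    obtain ⟨p⟩ := hconn x z
    exact walk_closed' hclosed (by left; rfl) p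
  have : Fintype.card V ≤ 2 := by
    have hsub : (Finset.univ : Finset V) ⊆ {x, y} := by
      intro z _
      rcases hall z with h | h <;> subst h <;> simp
    calc Fintype.card V = Finset.univ.card := rfl
      _ ≤ ({x, y} : Finset V).card := Finset.card_le_card hsub
      _ ≤ 2 := Finset.card_insert_le _ _ |>.trans (by simp)
  omega

lemma card_le_ann {V : Type*} [Fintype V] {G : SimpleGraph V} {A : Finset V}
    (hA : IsAnnSet G A) : A.card ≤ annihilation G :=
  le_csSup ⟨Fintype.card V, by rintro k ⟨B, -, rfl⟩; exact B.card_le_univ⟩ ⟨A, hA, rfl⟩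

lemma leaves_card_le {V : Type*} [Fintype V] {G : SimpleGraph V} (hconn : G.Connected)
    (hn : 3 ≤ Fintype.card V) (A : Finset V) (hA : ∀ v ∈ A, G.degree v = 1) :
    A.card ≤ G.edgeFinset.card := by
  classical
  set f : V → Sym2 V := fun x => if h : ∃ w, G.Adj x w then s(x, h.choose) else s(x, x) with hf
  have hadj : ∀ x ∈ A, ∃ w, G.Adj x w := fun x hx =>
    G.degree_pos_iff_exists_adj x |>.mp (degree_pos' hconn hn x)
  apply Finset.card_le_card_of_injOn f
  · intro x hx
    have h := hadj x hx
    rw [Finset.mem_coe, SimpleGraph.mem_edgeFinset, hf]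
    simp only [dif_pos h]
    exact h.choose_spec
  · intro x hx y hy hxy
    by_contra hne
    have hx' := hadj x hx
    have hy' := hadj y hy
    rw [hf] at hxy
    simp only [dif_pos hx', dif_pos hy'] at hxy
    rw [Sym2.eq_iff] at hxy
    rcases hxy with ⟨h1, h2⟩ | ⟨h1, h2⟩
    · exact hne h1
    · exact no_adj_leaves' hconn hn (hA _ hx) (hA _ hy) (h2 ▸ hx'.choose_spec)

lemma aux_swap {V : Type*} [Fintype V] {G : SimpleGraph V} (hconn : G.Connected)
    (hn : 3 ≤ Fintype.card V) :
    ∀ k (T : Finset V), IsAnnSet G T → T.card = annihilation G →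
    ((Finset.univ.filter (fun v => G.degree v = 1)) \ T).card = k →
    ∃ T' : Finset V, IsAnnSet G T' ∧ T'.card = T.card ∧ ∀ v : V, G.degree v = 1 → v ∈ T' := by
  intro k
  induction k with
  | zero =>
    intro T hT _ hL
    refine ⟨T, hT, rfl, fun v hv => ?_⟩
    by_contra hvT
    have : v ∈ (Finset.univ.filter (fun v => G.degree v = 1)) \ T :=
      Finset.mem_sdiff.mpr ⟨Finset.mem_filter.mpr ⟨Finset.mem_univ v, hv⟩, hvT⟩
    rw [Finset.card_eq_zero.mp hL] at this
    exact absurd this (Finset.notMem_empty v)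
  | succ k ih =>
    intro T hT hTcard hL
    obtain ⟨v, hv⟩ : ((Finset.univ.filter (fun v => G.degree v = 1)) \ T).Nonempty :=
      Finset.card_pos.mp (by omega)
    have hvL : G.degree v = 1 := (Finset.mem_filter.mp (Finset.mem_sdiff.mp hv).1).2
    have hvT : v ∉ T := (Finset.mem_sdiff.mp hv).2
    by_cases hcase : ∃ u ∈ T, G.degree u ≠ 1
    · obtain ⟨u, huT, hu1⟩ := hcase
      set T' := insert v (T.erase u) with hT'def
      have hvT' : v ∉ T.erase u := fun h => hvT (Finset.mem_of_mem_erase h)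
      have hcard : T'.card = T.card := by
        rw [hT'def, Finset.card_insert_of_notMem hvT', Finset.card_erase_of_mem huT]
        have : 0 < T.card := Finset.card_pos.mpr ⟨u, huT⟩
        omega
      have hupos : 1 ≤ G.degree u := degree_pos' hconn hn u
      have hsum : ∑ x ∈ T.erase u, G.degree x + G.degree u = ∑ x ∈ T, G.degree x :=
        Finset.sum_erase_add T _ huT
      have hT'sum : ∑ x ∈ T', G.degree x = G.degree v + ∑ x ∈ T.erase u, G.degree x :=
        Finset.sum_insert hvT'
      have hann : IsAnnSet G T' := by
        unfold IsAnnSet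
        have := hT
        unfold IsAnnSet at this
        omega
      have hmiss : ((Finset.univ.filter (fun v => G.degree v = 1)) \ T').card = k := by
        have heq : (Finset.univ.filter (fun v => G.degree v = 1)) \ T' =
            ((Finset.univ.filter (fun v => G.degree v = 1)) \ T).erase v := by
          ext a
          simp only [hT'def, Finset.mem_erase, Finset.mem_sdiff, Finset.mem_filter,
            Finset.mem_univ, true_and, Finset.mem_insert, Finset.mem_erase, not_or, not_and,
            Decidable.not_not]
          have hau : G.degree a = 1 → a ≠ u := fun h1 he => hu1 (he ▸ h1)
          tauto
        rw [heq, Finset.card_erase_of_mem hv, hL]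
        omega
      obtain ⟨T'', h1, h2, h3⟩ := ih T' hann (hcard.trans hTcard) hmiss
      exact ⟨T'', h1, h2.trans hcard, h3⟩
    · exfalso
      push_neg at hcase
      have hall : ∀ u ∈ insert v T, G.degree u = 1 := by
        intro u hu
        rcases Finset.mem_insert.mp hu with rfl | h
        · exact hvL
        · exact hcase u h
      have hsum : ∑ u ∈ insert v T, G.degree u = (insert v T).card := by
        rw [Finset.card_eq_sum_ones]
        exact Finset.sum_congr rfl hall
      have hle : (insert v T).card ≤ G.edgeFinset.card := leaves_card_le hconn hn _ hall
      have hann : IsAnnSet G (insert v T) := by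
        unfold IsAnnSet
        omega
      have := card_le_ann hann
      rw [Finset.card_insert_of_notMem hvT] at this
      omega

/-- In a connected graph on at least 3 vertices, every optimal annihilation set can be
replaced by an optimal annihilation set of the same cardinality containing all leaves. -/
theorem stmt2 {V : Type*} [Fintype V] (G : SimpleGraph V) (hconn : G.Connected)
    (hn : 3 ≤ Fintype.card V) (S : Finset V) (hS : IsAnnSet G S)
    (hopt : S.card = annihilation G) :
    ∃ T : Finset V, IsAnnSet G T ∧ T.card = S.card ∧ ∀ v : V, G.degree v = 1 → v ∈ T :=
  aux_swap hconn hn _ S hS hopt rfl
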